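/- arXiv:2503.09909 — 2 statements merged into one kernel-verified Lean document; each statement's English description precedes it below -/
import Mathlib

section
/- Let n ≥ 1 and ℓ ≥ 1. Let c : ℕ → ℝ be a sequence with every c_k ∈ ℤ[X_{n-1}] and c_{k+ℓ} = c_k for all k ≥ 0, and suppose the continued fraction [c₀, c₁, c₂, …] converges to X_n. Then the convergents satisfy p_{ℓ−1}² − X_n²·q_{ℓ−1}² = (−1)^ℓ. -/
/-- `X n = 2 cos(2π/2^(n+2))`. -/
noncomputable def X (n : ℕ) : ℝ := 2 * Real.cos (2 * Real.pi / 2 ^ (n + 2))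

/-- Convergent numerators: `cfNum c (k+1) = p_k`, with `cfNum c 0 = p_{-1} = 1`. -/
noncomputable def cfNum (c : ℕ → ℝ) : ℕ → ℝ
  | 0 => 1
  | 1 => c 0
  | (k + 2) => c (k + 1) * cfNum c (k + 1) + cfNum c k

/-- Convergent denominators: `cfDen c (k+1) = q_k`, with `cfDen c 0 = q_{-1} = 0`. -/
noncomputable def cfDen (c : ℕ → ℝ) : ℕ → ℝ
  | 0 => 0
  | 1 => 1
  | (k + 2) => c (k + 1) * cfDen c (k + 1) + cfDen c k

/-- The continued fraction `[c₀, c₁, c₂, …]` converges to `x`. -/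
def CFConv (c : ℕ → ℝ) (x : ℝ) : Prop :=
  Filter.Tendsto (fun k => cfNum c (k + 1) / cfDen c (k + 1)) Filter.atTop (nhds x)

open Filter IntermediateField

private lemma X_succ_sq (m : ℕ) : X (m + 1) ^ 2 = 2 + X m := by
  have h2 : 2 * (2 * Real.pi / 2 ^ (m + 1 + 2)) = 2 * Real.pi / 2 ^ (m + 2) := by
    rw [show m + 1 + 2 = (m + 2) + 1 from rfl, pow_succ]
    have : (2:ℝ) ^ (m+2) ≠ 0 := by positivity
    field_simp
  unfold X
  rw [mul_pow, Real.cos_sq, ← h2]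
  ring

private lemma X_zero : X 0 = 0 := by
  unfold X
  norm_num
  rw [show (2:ℝ) * Real.pi / 4 = Real.pi / 2 by ring]
  exact Real.cos_pi_div_two

private lemma X_pos {n : ℕ} (hn : 1 ≤ n) : 0 < X n := by
  have hp := Real.pi_pos
  have h8 : (8:ℝ) ≤ 2 ^ (n+2) := by
    calc (8:ℝ) = 2^3 := by norm_num
    _ ≤ 2^(n+2) := by apply pow_le_pow_right₀ (by norm_num); omega
  have h1 : 0 < 2 * Real.pi / 2 ^ (n + 2) := by positivity
  have h2 : 2 * Real.pi / 2 ^ (n + 2) < Real.pi / 2 := by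
    rw [div_lt_div_iff₀ (by positivity) (by norm_num)]
    nlinarith
  have := Real.cos_pos_of_mem_Ioo ⟨by linarith, h2⟩
  unfold X; linarith

/-- The iterated polynomial annihilating `X m`. -/
noncomputable def QP : ℕ → Polynomial ℚ
  | 0 => Polynomial.X
  | (m+1) => (QP m).comp (Polynomial.X ^ 2 - Polynomial.C 2)

private lemma QP_monic : ∀ m, (QP m).Monic ∧ (QP m).natDegree = 2 ^ m := by
  intro m
  induction m with
  | zero => exact ⟨Polynomial.monic_X, Polynomial.natDegree_X⟩
  | succ m ih =>
    have hq : (Polynomial.X ^ 2 - Polynomial.C 2 : Polynomial ℚ).Monic :=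
      Polynomial.monic_X_pow_sub_C _ two_ne_zero
    have hqd : (Polynomial.X ^ 2 - Polynomial.C 2 : Polynomial ℚ).natDegree = 2 :=
      Polynomial.natDegree_X_pow_sub_C
    constructor
    · exact ih.1.comp hq (by rw [hqd]; norm_num)
    · rw [show QP (m+1) = (QP m).comp (Polynomial.X ^ 2 - Polynomial.C 2) from rfl,
        Polynomial.natDegree_comp, ih.2, hqd, pow_succ]

private lemma QP_root : ∀ m, Polynomial.aeval (X m) (QP m) = 0 := by
  intro m
  induction m with
  | zero => simp [QP, X_zero]
  | succ m ih =>
    rw [show QP (m+1) = (QP m).comp (Polynomial.X ^ 2 - Polynomial.C 2) from rfl,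
      Polynomial.aeval_comp]
    have : Polynomial.aeval (X (m+1)) (Polynomial.X ^ 2 - Polynomial.C 2 : Polynomial ℚ)
        = X m := by
      rw [map_sub, map_pow, Polynomial.aeval_X, Polynomial.aeval_C, X_succ_sq]
      norm_num
    rw [this, ih]

private lemma X_int (m : ℕ) : IsIntegral ℚ (X m) :=
  ⟨QP m, (QP_monic m).1, by rw [← Polynomial.aeval_def]; exact QP_root m⟩

private lemma X_deg_le (m : ℕ) : (minpoly ℚ (X m)).natDegree ≤ 2 ^ m := by
  refine le_trans (Polynomial.natDegree_le_of_dvd (minpoly.dvd ℚ _ (QP_root m))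
    (QP_monic m).1.ne_zero) ?_
  exact le_of_eq (QP_monic m).2

private lemma abstract_tower {F E : Type*} [Field F] [Field E] [Algebra F E] {y z : E}
    (hy : IsIntegral F y) (hz2 : z ^ 2 - y * z + 1 = 0) :
    (minpoly F z).natDegree ≤ 2 * (minpoly F y).natDegree := by
  set yK : F⟮y⟯ := AdjoinSimple.gen F y with hyK
  have hyKc : algebraMap F⟮y⟯ E yK = y := rfl
  set q : Polynomial F⟮y⟯ := Polynomial.X ^ 2 - (Polynomial.C yK * Polynomial.X - 1) with hq
  have hqm : q.Monic := by
    rw [hq]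
    apply Polynomial.monic_X_pow_sub (n := 2)
    refine lt_of_le_of_lt (le_trans (Polynomial.degree_sub_le _ _) ?_)
      (by norm_num : (1 : WithBot ℕ) < 2)
    refine max_le (le_trans (Polynomial.degree_mul_le _ _) ?_) ?_
    · calc (Polynomial.C yK).degree + (Polynomial.X : Polynomial F⟮y⟯).degree
          ≤ 0 + 1 := add_le_add Polynomial.degree_C_le (le_of_eq Polynomial.degree_X)
      _ = 1 := by norm_num
    · exact le_trans Polynomial.degree_one_le (by norm_num)
  have hqd : q.natDegree ≤ 2 := by
    rw [hq]
    refine le_trans (Polynomial.natDegree_sub_le _ _) ?_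
    refine max_le (le_of_eq (Polynomial.natDegree_X_pow 2)) ?_
    refine le_trans (Polynomial.natDegree_sub_le _ _) ?_
    refine max_le ?_ (by simp)
    refine le_trans (Polynomial.natDegree_mul_le) ?_
    simp
  have hz : Polynomial.aeval z q = 0 := by
    rw [hq, map_sub, map_sub, map_pow, map_mul, map_one, Polynomial.aeval_X,
      Polynomial.aeval_C, hyKc]
    linear_combination hz2
  have hzint : IsIntegral F⟮y⟯ z := ⟨q, hqm, by rw [← Polynomial.aeval_def]; exact hz⟩
  haveI h1 : FiniteDimensional F⟮y⟯ F⟮y⟯⟮z⟯ := adjoin.finiteDimensional hzint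
  have h2 : Module.finrank F⟮y⟯ F⟮y⟯⟮z⟯ ≤ 2 := by
    rw [adjoin.finrank hzint]
    exact le_trans (Polynomial.natDegree_le_of_dvd (minpoly.dvd _ _ hz) hqm.ne_zero) hqd
  haveI h3 : FiniteDimensional F F⟮y⟯ := adjoin.finiteDimensional hy
  haveI h4 : FiniteDimensional F F⟮y⟯⟮z⟯ :=
    Module.Finite.trans (R := F) F⟮y⟯ ↥(F⟮y⟯⟮z⟯)
  haveI htower : IsScalarTower F ↥(F⟮y⟯⟮z⟯) E := IsScalarTower.of_algebraMap_eq' rfl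
  have hmem : z ∈ F⟮y⟯⟮z⟯ := mem_adjoin_simple_self F⟮y⟯ z
  have h5 : minpoly F z = minpoly F (⟨z, hmem⟩ : F⟮y⟯⟮z⟯) :=
    minpoly.algebraMap_eq (A := F) (B := ↥(F⟮y⟯⟮z⟯)) (B' := E)
      (algebraMap ↥(F⟮y⟯⟮z⟯) E).injective (⟨z, hmem⟩ : F⟮y⟯⟮z⟯)
  have h6 : (minpoly F (⟨z, hmem⟩ : F⟮y⟯⟮z⟯)).natDegree ≤ Module.finrank F ↥(F⟮y⟯⟮z⟯) :=
    minpoly.natDegree_le _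
  have h7 : Module.finrank F F⟮y⟯ * Module.finrank F⟮y⟯ ↥(F⟮y⟯⟮z⟯)
      = Module.finrank F ↥(F⟮y⟯⟮z⟯) := by
    haveI : Module.Free F⟮y⟯ ↥(F⟮y⟯⟮z⟯) := Module.Free.of_divisionRing _ _
    exact Module.finrank_mul_finrank F F⟮y⟯ ↥(F⟮y⟯⟮z⟯)
  have h8 : Module.finrank F F⟮y⟯ = (minpoly F y).natDegree := adjoin.finrank hy
  calc (minpoly F z).natDegree ≤ Module.finrank F ↥(F⟮y⟯⟮z⟯) := by rw [h5]; exact h6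
  _ = Module.finrank F F⟮y⟯ * Module.finrank F⟮y⟯ ↥(F⟮y⟯⟮z⟯) := h7.symm
  _ ≤ (minpoly F y).natDegree * 2 := Nat.mul_le_mul (le_of_eq h8) h2
  _ = 2 * (minpoly F y).natDegree := by ring

private lemma exp_add_inv (θ : ℝ) :
    Complex.exp (θ * Complex.I) + (Complex.exp (θ * Complex.I))⁻¹ = 2 * Real.cos θ := by
  rw [← Complex.exp_neg, Complex.ofReal_cos, Complex.cos]
  ring_nf

private lemma X_lower (n : ℕ) : 2 ^ n ≤ (minpoly ℚ (X n)).natDegree := by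
  have hN : (2:ℕ) ^ (n+2) ≠ 0 := by positivity
  have hNpos : 0 < (2:ℕ) ^ (n+2) := Nat.pos_of_ne_zero hN
  set ζ : ℂ := Complex.exp (2 * Real.pi * Complex.I / ((2^(n+2) : ℕ) : ℂ)) with hζdef
  have hζ : IsPrimitiveRoot ζ (2^(n+2)) := Complex.isPrimitiveRoot_exp _ hN
  have hζ0 : ζ ≠ 0 := Complex.exp_ne_zero _
  have hθ : ζ = Complex.exp ((2 * Real.pi / 2^(n+2) : ℝ) * Complex.I) := by
    rw [hζdef]
    congr 1
    push_cast
    ring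
  have hy : ((X n : ℝ) : ℂ) = ζ + ζ⁻¹ := by
    have h1 : ((X n : ℝ) : ℂ) = 2 * Real.cos (2 * Real.pi / 2 ^ (n + 2)) := by
      unfold X; push_cast; ring
    rw [h1, hθ, exp_add_inv]
  have hζdeg : (minpoly ℚ ζ).natDegree = 2 ^ (n+1) := by
    rw [← Polynomial.cyclotomic_eq_minpoly_rat hζ hNpos, Polynomial.natDegree_cyclotomic,
      Nat.totient_prime_pow Nat.prime_two (by omega)]
    simp
  have hyint : IsIntegral ℚ (((X n : ℝ) : ℂ)) :=
    (X_int n).map (IsScalarTower.toAlgHom ℚ ℝ ℂ)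
  have hz2 : ζ ^ 2 - ((X n : ℝ) : ℂ) * ζ + 1 = 0 := by
    rw [hy]
    field_simp
    ring
  have htow := abstract_tower (F := ℚ) (E := ℂ) hyint hz2
  have hmm : minpoly ℚ (((X n : ℝ) : ℂ)) = minpoly ℚ (X n) :=
    minpoly.algebraMap_eq (algebraMap ℝ ℂ).injective (X n)
  rw [hmm, hζdeg] at htow
  have : 2 ^ (n+1) = 2 * 2 ^ n := by ring
  omega

private lemma nondeg (m : ℕ) {a b : ℝ} (ha : a ∈ Algebra.adjoin ℤ ({X m} : Set ℝ))
    (hb : b ∈ Algebra.adjoin ℤ ({X m} : Set ℝ)) (h : a * X (m+1) + b = 0) :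
    a = 0 ∧ b = 0 := by
  have ha0 : a = 0 := by
    by_contra ha0
    have hK : ∀ r, r ∈ Algebra.adjoin ℤ ({X m} : Set ℝ) → r ∈ ℚ⟮X m⟯ := by
      intro r hr
      have hle : Algebra.adjoin ℤ ({X m} : Set ℝ) ≤
          Subalgebra.restrictScalars ℤ (ℚ⟮X m⟯).toSubalgebra := by
        rw [Algebra.adjoin_le_iff]
        intro s hs
        rw [Set.mem_singleton_iff] at hs
        subst hs
        exact mem_adjoin_simple_self ℚ (X m)
      exact hle hr
    have hxK : X (m+1) ∈ ℚ⟮X m⟯ := by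
      have hval : X (m+1) = -b / a := by
        field_simp
        linarith [h]
      rw [hval]
      exact div_mem (neg_mem (hK b hb)) (hK a ha)
    haveI hfd : FiniteDimensional ℚ ℚ⟮X m⟯ := adjoin.finiteDimensional (X_int m)
    have h1 : minpoly ℚ (X (m+1)) = minpoly ℚ (⟨X (m+1), hxK⟩ : ℚ⟮X m⟯) :=
      minpoly.algebraMap_eq (A := ℚ) (B := ↥(ℚ⟮X m⟯)) (B' := ℝ)
        (algebraMap ↥(ℚ⟮X m⟯) ℝ).injective (⟨X (m+1), hxK⟩ : ℚ⟮X m⟯)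
    have h2 : (minpoly ℚ (⟨X (m+1), hxK⟩ : ℚ⟮X m⟯)).natDegree
        ≤ Module.finrank ℚ ℚ⟮X m⟯ := minpoly.natDegree_le _
    have h3 : Module.finrank ℚ ℚ⟮X m⟯ = (minpoly ℚ (X m)).natDegree :=
      adjoin.finrank (X_int m)
    have h4 := X_deg_le m
    have h5 := X_lower (m+1)
    rw [h1] at h5
    have hpm : 1 ≤ 2 ^ m := Nat.one_le_two_pow
    have : (2:ℕ) ^ (m+1) = 2 * 2 ^ m := by ring
    omega
  refine ⟨ha0, ?_⟩
  rw [ha0] at h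
  linarith [h]

private lemma cfNum_step (c : ℕ → ℝ) (k : ℕ) :
    cfNum c (k + 2) = c (k + 1) * cfNum c (k + 1) + cfNum c k := rfl

private lemma cfDen_step (c : ℕ → ℝ) (k : ℕ) :
    cfDen c (k + 2) = c (k + 1) * cfDen c (k + 1) + cfDen c k := rfl

private lemma cf_det (c : ℕ → ℝ) : ∀ k,
    cfNum c (k + 1) * cfDen c k - cfNum c k * cfDen c (k + 1) = (-1 : ℝ) ^ (k + 1) := by
  intro k
  induction k with
  | zero => simp [cfNum, cfDen]
  | succ k ih =>
    rw [cfNum_step, cfDen_step]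
    have h : ((-1 : ℝ)) ^ (k + 2) = -(-1 : ℝ) ^ (k + 1) := by
      rw [pow_succ]; ring
    rw [h]
    linear_combination -ih

private lemma cf_shift (c : ℕ → ℝ) (L : ℕ) (hper : ∀ k, c (k + (L + 1)) = c k) : ∀ j,
    cfNum c (L + 1 + j) = cfNum c (L + 1) * cfNum c j + cfNum c L * cfDen c j ∧
    cfDen c (L + 1 + j) = cfDen c (L + 1) * cfNum c j + cfDen c L * cfDen c j := by
  have key : ∀ j,
      (cfNum c (L + 1 + j) = cfNum c (L + 1) * cfNum c j + cfNum c L * cfDen c j ∧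
       cfDen c (L + 1 + j) = cfDen c (L + 1) * cfNum c j + cfDen c L * cfDen c j) ∧
      (cfNum c (L + 1 + (j+1)) = cfNum c (L + 1) * cfNum c (j+1) + cfNum c L * cfDen c (j+1) ∧
       cfDen c (L + 1 + (j+1)) = cfDen c (L + 1) * cfNum c (j+1) + cfDen c L * cfDen c (j+1)) := by
    intro j
    induction j with
    | zero =>
      have hc0 : c (L + 1) = c 0 := by
        have := hper 0
        simpa using this
      constructor
      · constructor <;> simp [cfNum, cfDen]
      · constructor
        · rw [show L + 1 + 1 = L + 2 from rfl, cfNum_step, hc0]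
          simp [cfNum, cfDen]
          ring
        · rw [show L + 1 + 1 = L + 2 from rfl, cfDen_step, hc0]
          simp [cfNum, cfDen]
          ring
    | succ j ih =>
      obtain ⟨ih0, ih1⟩ := ih
      refine ⟨ih1, ?_, ?_⟩
      · have hcc : c (L + 1 + (j + 1)) = c (j + 1) := by
          have := hper (j + 1)
          rw [show j + 1 + (L + 1) = L + 1 + (j + 1) by omega] at this
          exact this
        rw [show L + 1 + (j + 1 + 1) = (L + 1 + j) + 2 from by omega, cfNum_step,
          show L + 1 + j + 1 = L + 1 + (j + 1) from by omega, hcc,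
          show j + 1 + 1 = j + 2 from rfl, cfNum_step, cfDen_step]
        linear_combination c (j+1) * ih1.1 + ih0.1
      · have hcc : c (L + 1 + (j + 1)) = c (j + 1) := by
          have := hper (j + 1)
          rw [show j + 1 + (L + 1) = L + 1 + (j + 1) by omega] at this
          exact this
        rw [show L + 1 + (j + 1 + 1) = (L + 1 + j) + 2 from by omega, cfDen_step,
          show L + 1 + j + 1 = L + 1 + (j + 1) from by omega, hcc,
          show j + 1 + 1 = j + 2 from rfl, cfNum_step, cfDen_step]
        linear_combination c (j+1) * ih1.2 + ih0.2
  exact fun j => (key j).1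

private lemma cf_mem (c : ℕ → ℝ) (R : Subalgebra ℤ ℝ) (hc : ∀ k, c k ∈ R) :
    ∀ k, cfNum c k ∈ R ∧ cfDen c k ∈ R := by
  have key : ∀ k, (cfNum c k ∈ R ∧ cfDen c k ∈ R) ∧
      (cfNum c (k+1) ∈ R ∧ cfDen c (k+1) ∈ R) := by
    intro k
    induction k with
    | zero =>
      refine ⟨⟨?_, ?_⟩, ?_, ?_⟩ <;> simp [cfNum, cfDen]
      exact hc 0
    | succ k ih =>
      obtain ⟨ih0, ih1⟩ := ih
      refine ⟨ih1, ?_, ?_⟩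
      · rw [cfNum_step]
        exact add_mem (mul_mem (hc (k+1)) ih1.1) ih0.1
      · rw [cfDen_step]
        exact add_mem (mul_mem (hc (k+1)) ih1.2) ih0.2
  exact fun k => (key k).1

theorem stmt2 (n ℓ : ℕ) (hn : 1 ≤ n) (hℓ : 1 ≤ ℓ) (c : ℕ → ℝ)
    (hc : ∀ k, c k ∈ Algebra.adjoin ℤ ({X (n - 1)} : Set ℝ))
    (hper : ∀ k, c (k + ℓ) = c k)
    (hconv : CFConv c (X n)) :
    cfNum c ℓ ^ 2 - X n ^ 2 * cfDen c ℓ ^ 2 = (-1 : ℝ) ^ ℓ := by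
  obtain ⟨m, rfl⟩ : ∃ m, n = m + 1 := ⟨n - 1, by omega⟩
  obtain ⟨L, rfl⟩ : ∃ L, ℓ = L + 1 := ⟨ℓ - 1, by omega⟩
  have hc' : ∀ k, c k ∈ Algebra.adjoin ℤ ({X m} : Set ℝ) := by
    intro k
    have := hc k
    simpa using this
  have hx0 : 0 < X (m+1) := X_pos (by omega)
  have hxsq : X (m+1) ^ 2 = 2 + X m := X_succ_sq m
  have hdet := cf_det c L
  have hshift := cf_shift c L hper
  have hr : Tendsto (fun k => cfNum c (k + 1) / cfDen c (k + 1)) atTop (nhds (X (m+1))) :=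
    hconv
  have hrne : ∀ᶠ k in atTop, cfDen c (k + 1) ≠ 0 := by
    filter_upwards [hr.eventually_ne hx0.ne'] with k hk
    intro hd
    apply hk
    show cfNum c (k + 1) / cfDen c (k + 1) = 0
    rw [hd, div_zero]
  obtain ⟨N0, hN0⟩ := eventually_atTop.mp hrne
  have hkey : ∀ k ≥ N0, (cfNum c (L+1+(k+1)) / cfDen c (L+1+(k+1))) *
      (cfDen c (L+1) * (cfNum c (k+1) / cfDen c (k+1)) + cfDen c L)
      = cfNum c (L+1) * (cfNum c (k+1) / cfDen c (k+1)) + cfNum c L := by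
    intro k hk
    have h1 : cfDen c (k+1) ≠ 0 := hN0 k hk
    have h2 : cfDen c (L+1+(k+1)) ≠ 0 := by
      have := hN0 (L+1+k) (by omega)
      exact this
    have e1 : cfNum c (L+1+(k+1)) = cfNum c (L+1) * cfNum c (k+1) + cfNum c L * cfDen c (k+1) :=
      (hshift (k+1)).1
    have e2 : cfDen c (L+1+(k+1)) = cfDen c (L+1) * cfNum c (k+1) + cfDen c L * cfDen c (k+1) :=
      (hshift (k+1)).2
    rw [e2] at h2
    rw [e1, e2]
    field_simp
    have h2' : cfNum c (k + 1) * cfDen c (L + 1) + cfDen c (k + 1) * cfDen c L ≠ 0 := by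
      rw [mul_comm (cfNum c (k+1)), mul_comm (cfDen c (k+1))]; exact h2
    exact mul_div_cancel_right₀ _ h2'
  have hshift_t : Tendsto (fun k => cfNum c (L+1+(k+1)) / cfDen c (L+1+(k+1))) atTop
      (nhds (X (m+1))) := by
    have h := (tendsto_add_atTop_iff_nat
      (f := fun k => cfNum c (k + 1) / cfDen c (k + 1)) (L+1)).2 hr
    refine h.congr fun k => ?_
    rw [show k + (L+1) + 1 = L + 1 + (k + 1) by omega]
  have t1 : Tendsto (fun k => (cfNum c (L+1+(k+1)) / cfDen c (L+1+(k+1))) *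
      (cfDen c (L+1) * (cfNum c (k+1) / cfDen c (k+1)) + cfDen c L)) atTop
      (nhds (X (m+1) * (cfDen c (L+1) * X (m+1) + cfDen c L))) :=
    hshift_t.mul ((tendsto_const_nhds.mul hr).add tendsto_const_nhds)
  have t2 : Tendsto (fun k => cfNum c (L+1) * (cfNum c (k+1) / cfDen c (k+1)) + cfNum c L)
      atTop (nhds (cfNum c (L+1) * X (m+1) + cfNum c L)) :=
    (tendsto_const_nhds.mul hr).add tendsto_const_nhds
  have hmain : X (m+1) * (cfDen c (L+1) * X (m+1) + cfDen c L)
      = cfNum c (L+1) * X (m+1) + cfNum c L :=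
    tendsto_nhds_unique (t1.congr' (eventually_atTop.2 ⟨N0, hkey⟩)) t2
  have hmem := cf_mem c (Algebra.adjoin ℤ ({X m} : Set ℝ)) hc'
  have h2R : (2:ℝ) ∈ Algebra.adjoin ℤ ({X m} : Set ℝ) := by
    have h11 := add_mem (one_mem (Algebra.adjoin ℤ ({X m} : Set ℝ)))
      (one_mem (Algebra.adjoin ℤ ({X m} : Set ℝ)))
    norm_num at h11
    norm_num
  have hA : cfDen c L - cfNum c (L+1) ∈ Algebra.adjoin ℤ ({X m} : Set ℝ) :=
    sub_mem (hmem L).2 (hmem (L+1)).1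
  have hB : cfDen c (L+1) * (2 + X m) - cfNum c L ∈ Algebra.adjoin ℤ ({X m} : Set ℝ) :=
    sub_mem (mul_mem (hmem (L+1)).2 (add_mem h2R (Algebra.self_mem_adjoin_singleton ℤ _)))
      (hmem L).1
  have heq : (cfDen c L - cfNum c (L+1)) * X (m+1)
      + (cfDen c (L+1) * (2 + X m) - cfNum c L) = 0 := by
    linear_combination hmain - cfDen c (L+1) * hxsq
  obtain ⟨hA0, hB0⟩ := nondeg m hA hB heq
  rw [hxsq]
  linear_combination hdet - cfNum c (L+1) * hA0 - cfDen c (L+1) * hB0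
end

section
/- Let n ≥ 1 and let p, q, a₁, a₃ ∈ ℤ[X_{n-1}] satisfy p² − X_n²·q² = −1, p·a₁ = X_n²·q − 1, p·a₃ = q − 1, and p·q > 0. Then the purely periodic continued fraction [a₁, p, a₃, a₁, p, a₃, …] (i.e. the sequence c with c_{3k} = a₁, c_{3k+1} = p, c_{3k+2} = a₃ for all k ≥ 0) converges to X_n. -/
lemma cfNum_rec' (c : ℕ → ℝ) (k j i : ℕ) (hj : j = k+2) (hi : i = k+1) :
    cfNum c j = c i * cfNum c i + cfNum c k := by subst hj; subst hi; rw [cfNum]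

lemma cfDen_rec' (c : ℕ → ℝ) (k j i : ℕ) (hj : j = k+2) (hi : i = k+1) :
    cfDen c j = c i * cfDen c i + cfDen c k := by subst hj; subst hi; rw [cfDen]

lemma ratio_eq (N D y F E : ℝ) (hy : y ≠ 0) (hF : N + y*D = F) (hE : N + (-y)*D = E) :
    N / D = y*(F + E)/(F - E) := by
  have h2 : (2*y) ≠ 0 := mul_ne_zero two_ne_zero hy
  calc N/D = ((2*y)*N)/((2*y)*D) := (mul_div_mul_left N D h2).symm
  _ = y*(F + E)/(F - E) := by rw [← hF, ← hE]; ring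

lemma pow_ratio (y A B l u : ℝ) (hl : l ≠ 0) (m : ℕ) :
    y*(A + B*(u/l)^m)/(A - B*(u/l)^m) = y*(A*l^m + B*u^m)/(A*l^m - B*u^m) := by
  have hlm : (l:ℝ)^m ≠ 0 := pow_ne_zero m hl
  rw [← mul_div_mul_left (y*(A + B*(u/l)^m)) (A - B*(u/l)^m) hlm]
  congr 1
  · rw [div_pow]; field_simp
  · rw [div_pow]; field_simp

lemma conv_aux (y A B w : ℝ) (hA : A ≠ 0) (hw : |w| < 1) :
    Filter.Tendsto (fun m : ℕ => y*(A + B*w^m)/(A - B*w^m)) Filter.atTop (nhds y) := by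
  have hw0 : Filter.Tendsto (fun m : ℕ => w^m) Filter.atTop (nhds 0) :=
    tendsto_pow_atTop_nhds_zero_of_abs_lt_one hw
  have h1 : Filter.Tendsto (fun m : ℕ => y*(A + B*w^m)) Filter.atTop (nhds (y*(A + B*0))) :=
    (tendsto_const_nhds.add (tendsto_const_nhds.mul hw0)).const_mul y
  have h2 : Filter.Tendsto (fun m : ℕ => A - B*w^m) Filter.atTop (nhds (A - B*0)) :=
    tendsto_const_nhds.sub (tendsto_const_nhds.mul hw0)
  have h3 := h1.div h2 (by simpa using hA)
  have heq : y*(A + B*0)/(A - B*0) = y := by rw [mul_zero, add_zero, sub_zero, mul_div_assoc, div_self hA, mul_one]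
  rwa [heq] at h3

lemma cfG (x p q a₁ a₃ d : ℝ) (c : ℕ → ℝ)
    (hc1 : ∀ k, c (3*k) = a₁) (hc2 : ∀ k, c (3*k+1) = p) (hc3 : ∀ k, c (3*k+2) = a₃)
    (hd : d*d = x*x) (hp : p ≠ 0)
    (hpell : p^2 - x^2*q^2 = -1) (hd1 : p*a₁ = x^2*q - 1) (hd3 : p*a₃ = q-1) :
    ∀ m : ℕ, cfNum c (3*m) + d*cfDen c (3*m) = (p+d*q)^m
      ∧ cfNum c (3*m+1) + d*cfDen c (3*m+1) = (a₁+d)*(p+d*q)^m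
      ∧ cfNum c (3*m+2) + d*cfDen c (3*m+2) = d*(p+d*q)^(m+1) := by
  have h0 : c 0 = a₁ := by simpa using hc1 0
  have h1 : c 1 = p := by simpa using hc2 0
  intro m
  induction m with
  | zero =>
    refine ⟨by norm_num [cfNum, cfDen], by norm_num [cfNum, cfDen, h0], ?_⟩
    have hN : cfNum c (3*0+2) = c 1 * cfNum c 1 + cfNum c 0 := cfNum_rec' c 0 _ _ (by norm_num) rfl
    have hD : cfDen c (3*0+2) = c 1 * cfDen c 1 + cfDen c 0 := cfDen_rec' c 0 _ _ (by norm_num) rfl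
    rw [hN, hD]
    simp only [cfNum, cfDen, h0, h1, pow_one]
    linear_combination hd1 - q*hd
  | succ m ih =>
    obtain ⟨ih0, ih1, ih2⟩ := ih
    have hN3 : cfNum c (3*(m+1)) = c (3*m+2) * cfNum c (3*m+2) + cfNum c (3*m+1) :=
      cfNum_rec' c (3*m+1) _ _ (by ring) (by ring)
    have hD3 : cfDen c (3*(m+1)) = c (3*m+2) * cfDen c (3*m+2) + cfDen c (3*m+1) :=
      cfDen_rec' c (3*m+1) _ _ (by ring) (by ring)
    have key : p*(a₃*(d*(p+d*q)) + (a₁+d)) = p*(p+d*q) := by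
      linear_combination (d*(p+d*q))*hd3 + hd1 - hpell + (q^2 - q)*hd
    have key' : a₃*(d*(p+d*q)) + (a₁+d) = p+d*q := mul_left_cancel₀ hp key
    have e1 : cfNum c (3*(m+1)) + d*cfDen c (3*(m+1)) = (p+d*q)^(m+1) := by
      rw [hN3, hD3, hc3 m]
      linear_combination a₃*ih2 + ih1 + ((p+d*q)^m)*key'
    have hN4 : cfNum c (3*(m+1)+1) = c (3*(m+1)) * cfNum c (3*(m+1)) + cfNum c (3*m+2) :=
      cfNum_rec' c (3*m+2) _ _ (by ring) (by ring)
    have hD4 : cfDen c (3*(m+1)+1) = c (3*(m+1)) * cfDen c (3*(m+1)) + cfDen c (3*m+2) :=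
      cfDen_rec' c (3*m+2) _ _ (by ring) (by ring)
    have e2 : cfNum c (3*(m+1)+1) + d*cfDen c (3*(m+1)+1) = (a₁+d)*(p+d*q)^(m+1) := by
      rw [hN4, hD4, hc1 (m+1)]
      linear_combination a₁*e1 + ih2
    have key2 : p*(a₁+d) + 1 = d*(p+d*q) := by
      linear_combination hd1 - q*hd
    have hN5 : cfNum c (3*(m+1)+2) = c (3*(m+1)+1) * cfNum c (3*(m+1)+1) + cfNum c (3*(m+1)) :=
      cfNum_rec' c (3*(m+1)) _ _ rfl rfl
    have hD5 : cfDen c (3*(m+1)+2) = c (3*(m+1)+1) * cfDen c (3*(m+1)+1) + cfDen c (3*(m+1)) :=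
      cfDen_rec' c (3*(m+1)) _ _ rfl rfl
    have e3 : cfNum c (3*(m+1)+2) + d*cfDen c (3*(m+1)+2) = d*(p+d*q)^(m+1+1) := by
      rw [hN5, hD5, hc2 (m+1)]
      linear_combination p*e2 + e1 + ((p+d*q)^(m+1))*key2
    exact ⟨e1, e2, e3⟩

theorem stmt8 (n : ℕ) (hn : 1 ≤ n) (p q a₁ a₃ : ℝ)
    (hp : p ∈ Algebra.adjoin ℤ ({X (n - 1)} : Set ℝ))
    (hq : q ∈ Algebra.adjoin ℤ ({X (n - 1)} : Set ℝ))
    (ha₁ : a₁ ∈ Algebra.adjoin ℤ ({X (n - 1)} : Set ℝ))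
    (ha₃ : a₃ ∈ Algebra.adjoin ℤ ({X (n - 1)} : Set ℝ))
    (hpell : p ^ 2 - X n ^ 2 * q ^ 2 = -1)
    (hdvd1 : p * a₁ = X n ^ 2 * q - 1)
    (hdvd3 : p * a₃ = q - 1)
    (hpos : p * q > 0)
    (c : ℕ → ℝ) (hc1 : ∀ k, c (3 * k) = a₁) (hc2 : ∀ k, c (3 * k + 1) = p)
    (hc3 : ∀ k, c (3 * k + 2) = a₃) :
    CFConv c (X n) := by
  set x := X n with hxdef
  -- x > 1
  have hx : 1 < x := by
    have hpi := Real.pi_pos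
    have h8 : (8:ℝ) ≤ 2^(n+2) := by
      calc (8:ℝ) = 2^3 := by norm_num
      _ ≤ 2^(n+2) := by apply pow_le_pow_right₀ (by norm_num) (by omega)
    have hpos2 : (0:ℝ) < 2^(n+2) := by positivity
    have hθ4 : 2*Real.pi/2^(n+2) ≤ Real.pi/4 := by
      rw [div_le_div_iff₀ hpos2 (by norm_num)]
      nlinarith
    have hθ0 : 0 ≤ 2*Real.pi/2^(n+2) := by positivity
    have hcos := Real.cos_le_cos_of_nonneg_of_le_pi hθ0 (by linarith) hθ4
    rw [Real.cos_pi_div_four] at hcos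
    have s2 : 1 < Real.sqrt 2 := by
      nlinarith [Real.sq_sqrt (by norm_num : (0:ℝ) ≤ 2), Real.sqrt_nonneg 2]
    rw [hxdef]; unfold X
    linarith
  have hx0 : x ≠ 0 := by linarith
  -- basic nonvanishing
  have hp0 : p ≠ 0 := by
    intro h; rw [h] at hpos; simp at hpos
  -- l and u
  set l := p + x*q with hldef
  set u := p + (-x)*q with hudef
  have hlu : l * u = -1 := by rw [hldef, hudef]; linear_combination hpell
  have hxq : (x*q)^2 = p^2 + 1 := by linear_combination -hpell
  have habsl : 1 < |l| := by
    rcases mul_pos_iff.mp hpos with ⟨hp1, hq1⟩ | ⟨hp1, hq1⟩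
    · have hxq0 : 0 < x*q := mul_pos (by linarith) hq1
      have : 1 ≤ x*q := by nlinarith
      rw [abs_of_pos (by rw [hldef]; nlinarith)]
      rw [hldef]; nlinarith
    · have hxq0 : x*q < 0 := mul_neg_of_pos_of_neg (by linarith) hq1
      have : x*q ≤ -1 := by nlinarith
      rw [abs_of_neg (by rw [hldef]; nlinarith)]
      rw [hldef]; nlinarith
  have hl0 : l ≠ 0 := by
    intro h; rw [h] at habsl; simp at habsl; linarith
  have habsu : |u| < 1 := by
    have h1 : |l| * |u| = 1 := by rw [← abs_mul, hlu]; norm_num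
    nlinarith [abs_nonneg u]
  have hw : |u/l| < 1 := by
    rw [abs_div, div_lt_one (by linarith [abs_nonneg l])]
    linarith
  have ha : a₁ + x ≠ 0 := by
    intro h
    have hxl : x * l = 1 := by rw [hldef]; linear_combination p*h - hdvd1
    have : |x*l| = 1 := by rw [hxl]; norm_num
    rw [abs_mul, abs_of_pos (by linarith : (0:ℝ) < x)] at this
    nlinarith
  -- closed forms
  have hF := cfG x p q a₁ a₃ x c hc1 hc2 hc3 rfl hp0 hpell hdvd1 hdvd3
  have hE := cfG x p q a₁ a₃ (-x) c hc1 hc2 hc3 (by ring) hp0 hpell hdvd1 hdvd3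
  -- three subsequence limits
  have t0 : Filter.Tendsto (fun m : ℕ => cfNum c (3*m+1) / cfDen c (3*m+1))
      Filter.atTop (nhds x) := by
    refine Filter.Tendsto.congr (fun m => ?_) (conv_aux x (a₁+x) (a₁+(-x)) (u/l) ha hw)
    rw [pow_ratio x (a₁+x) (a₁+(-x)) l u hl0 m]
    exact (ratio_eq _ _ x _ _ hx0
      (by linear_combination (hF m).2.1) (by linear_combination (hE m).2.1)).symm
  have hxl0 : x*l ≠ 0 := mul_ne_zero hx0 hl0
  have t1 : Filter.Tendsto (fun m : ℕ => cfNum c (3*m+2) / cfDen c (3*m+2))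
      Filter.atTop (nhds x) := by
    refine Filter.Tendsto.congr (fun m => ?_) (conv_aux x (x*l) ((-x)*u) (u/l) hxl0 hw)
    rw [pow_ratio x (x*l) ((-x)*u) l u hl0 m]
    exact (ratio_eq _ _ x _ _ hx0
      (by linear_combination (hF m).2.2) (by linear_combination (hE m).2.2)).symm
  have t2 : Filter.Tendsto (fun m : ℕ => cfNum c (3*m+3) / cfDen c (3*m+3))
      Filter.atTop (nhds x) := by
    refine Filter.Tendsto.congr (fun m => ?_) (conv_aux x l u (u/l) hl0 hw)
    rw [pow_ratio x l u l u hl0 m]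
    have h3 : 3*(m+1) = 3*m+3 := by ring
    have hF3 := (hF (m+1)).1; rw [h3] at hF3
    have hE3 := (hE (m+1)).1; rw [h3] at hE3
    exact (ratio_eq _ _ x _ _ hx0
      (by linear_combination hF3) (by linear_combination hE3)).symm
  -- combine
  rw [CFConv, Metric.tendsto_atTop] at *
  intro ε hε
  obtain ⟨N0, hN0⟩ := t0 ε hε
  obtain ⟨N1, hN1⟩ := t1 ε hε
  obtain ⟨N2, hN2⟩ := t2 ε hε
  refine ⟨3*(N0+N1+N2)+3, fun k hk => ?_⟩
  have hdiv : k = 3*(k/3) + k%3 := (Nat.div_add_mod k 3).symm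
  have hlt : k%3 < 3 := Nat.mod_lt k (by norm_num)
  set m := k/3 with hm
  have hmge : N0+N1+N2 ≤ m := by omega
  have : k%3 = 0 ∨ k%3 = 1 ∨ k%3 = 2 := by omega
  rcases this with h|h|h
  · have : k+1 = 3*m+1 := by omega
    rw [this]; exact hN0 m (by omega)
  · have : k+1 = 3*m+2 := by omega
    rw [this]; exact hN1 m (by omega)
  · have : k+1 = 3*m+3 := by omega
    rw [this]; exact hN2 m (by omega)
end
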